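/- Let α > 0 and let m, k be real numbers with k ≥ 2 and m > k + 4α(α + 1). Then for every r > 0: −m·f″(r)/f(r) − k·G″(r)/G(r) − h″(r)/h(r) > 0, where f(r) = r·(1+r²)^(−1/4), G(r) = r/arctan r, and h(r) = (1+r²)^(−α/2). -/

import Mathlib

noncomputable def f (r : ℝ) : ℝ := r * (1 + r ^ 2) ^ (-(1 / 4 : ℝ))

noncomputable def G (r : ℝ) : ℝ := r / Real.arctan r

noncomputable def h (α r : ℝ) : ℝ := (1 + r ^ 2) ^ (-(α / 2))

open Real

/-! ### Elementary arctan bounds -/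

lemma my_arctan_pos {x : ℝ} (hx : 0 < x) : 0 < arctan x := by
  have := arctan_strictMono hx
  rwa [arctan_zero] at this

lemma my_arctan_le_self {x : ℝ} (hx : 0 ≤ x) : arctan x ≤ x := by
  have hmono : Monotone (fun y : ℝ => y - arctan y) := by
    apply monotone_of_deriv_nonneg
    · exact differentiable_id.sub differentiable_arctan
    · intro y
      have hd : HasDerivAt (fun y : ℝ => y - arctan y) (1 - 1/(1+y^2)) y :=
        (hasDerivAt_id y).sub (hasDerivAt_arctan y)
      rw [hd.deriv]
      have h1 : (0:ℝ) < 1 + y^2 := by positivity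
      rw [sub_nonneg, div_le_one h1]
      nlinarith [sq_nonneg y]
  have := hmono hx
  simp only [arctan_zero, sub_zero] at this
  linarith

lemma my_arctan_cubic {x : ℝ} (hx : 0 ≤ x) : x - x^3/3 ≤ arctan x := by
  have hmono : Monotone (fun y : ℝ => arctan y - y + y^3/3) := by
    apply monotone_of_deriv_nonneg
    · apply Differentiable.add
      · exact differentiable_arctan.sub differentiable_id
      · exact (differentiable_pow 3).div_const 3
    · intro y
      have hd : HasDerivAt (fun y : ℝ => arctan y - y + y^3/3)
          (1/(1+y^2) - 1 + (3*y^2)/3) y := by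
        have h1 := ((hasDerivAt_arctan y).sub (hasDerivAt_id y)).add
          (((hasDerivAt_pow 3 y).div_const 3))
        exact h1.congr_deriv (by norm_num)
      rw [hd.deriv]
      have h1 : (0:ℝ) < 1 + y^2 := by positivity
      have h2 : (1 - y^2) * (1+y^2) ≤ 1 := by nlinarith [sq_nonneg (y^2)]
      have h3 : 1 - y^2 ≤ 1/(1+y^2) := by rw [le_div_iff₀ h1]; linarith
      nlinarith
  have := hmono hx
  simp only [arctan_zero] at this
  norm_num at this
  linarith

lemma my_arctan_rat {x : ℝ} (hx : 0 ≤ x) : 3*x/(3+x^2) ≤ arctan x := by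
  have hmono : Monotone (fun y : ℝ => arctan y - 3*y/(3+y^2)) := by
    apply monotone_of_deriv_nonneg
    · apply Differentiable.sub differentiable_arctan
      intro y
      apply DifferentiableAt.div
      · fun_prop
      · fun_prop
      · positivity
    · intro y
      have h3 : (0:ℝ) < 3 + y^2 := by positivity
      have hd : HasDerivAt (fun y : ℝ => arctan y - 3*y/(3+y^2))
          (1/(1+y^2) - (3*(3+y^2) - (3*y)*(2*y))/(3+y^2)^2) y := by
        have hnum : HasDerivAt (fun y : ℝ => 3*y) 3 y := by
          simpa using (hasDerivAt_id y).const_mul (3:ℝ)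
        have hden : HasDerivAt (fun y : ℝ => 3+y^2) (2*y) y := by
          simpa using ((hasDerivAt_pow 2 y).const_add (3:ℝ))
        exact (hasDerivAt_arctan y).sub (hnum.div hden h3.ne')
      rw [hd.deriv]
      have h1 : (0:ℝ) < 1 + y^2 := by positivity
      rw [sub_nonneg, div_le_div_iff₀ (by positivity) h1]
      nlinarith [sq_nonneg (y^2), sq_nonneg y]
  have := hmono hx
  simp only [arctan_zero] at this
  norm_num at this
  linarith

lemma my_arctan_pi {x : ℝ} (hx : 0 < x) : π/2 - 1/x ≤ arctan x := by
  have h1 := arctan_inv_of_pos hx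
  have h2 : arctan x⁻¹ ≤ x⁻¹ := my_arctan_le_self (by positivity)
  rw [h1] at h2
  rw [one_div]
  linarith

/-! ### The key inequality -/

lemma my_key {r : ℝ} (hr : 0 < r) :
    8*(r - arctan r) ≤ (6+r^2) * (arctan r)^2 * r := by
  set a := arctan r with ha_def
  have ha : 0 < a := my_arctan_pos hr
  rcases le_or_gt (r^2) 2 with hcase | hcase
  · have h1 : r - r^3/3 ≤ a := my_arctan_cubic hr.le
    have h2 : 3*r/(3+r^2) ≤ a := my_arctan_rat hr.le
    have h3 : 3*r ≤ a*(3+r^2) := by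
      rw [div_le_iff₀ (by positivity)] at h2; linarith
    have h4 : 9*r^2 ≤ a^2*(3+r^2)^2 := by nlinarith [h3, hr, ha]
    have h5 : 8*(3+r^2)^2 ≤ 27*(6+r^2) := by nlinarith [sq_nonneg r, hcase, hr]
    have hq : (0:ℝ) < (3+r^2)^2 := by positivity
    rw [← mul_le_mul_iff_of_pos_right hq]
    have e1 : 8*(r-a)*(3+r^2)^2 ≤ (8*r^3/3)*(3+r^2)^2 :=
      mul_le_mul_of_nonneg_right (by linarith) hq.le
    have e2 : (8*r^3/3)*(3+r^2)^2 ≤ 9*r^3*(6+r^2) := by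
      nlinarith [mul_le_mul_of_nonneg_left h5 (by positivity : (0:ℝ) ≤ r^3/3)]
    have e3 : 9*r^3*(6+r^2) ≤ (6+r^2)*a^2*r*(3+r^2)^2 := by
      nlinarith [mul_le_mul_of_nonneg_left h4 (by positivity : (0:ℝ) ≤ (6+r^2)*r/9)]
    linarith
  · have hr2 : 2 ≤ r^2 := hcase.le
    have hr14 : (1.41:ℝ) ≤ r := by nlinarith
    have hpil : (3.14:ℝ) ≤ π := by linarith [pi_gt_d6]
    have hpiu : π ≤ (3.15:ℝ) := by linarith [pi_lt_d2]
    have hlow : π/2 - 1/r ≤ a := my_arctan_pi hr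
    have h1r : 1/r < 1 := by rw [div_lt_one hr]; linarith
    have h6 : (0:ℝ) < π/2 - 1/r := by linarith
    have hsq : (π/2 - 1/r)^2 ≤ a^2 := by nlinarith
    have goal2 : 8*r^2 - 4*π*r + 8 ≤ (6+r^2)*(π*r/2 - 1)^2 := by
      nlinarith [sq_nonneg (r - 1.41), sq_nonneg r, mul_le_mul_of_nonneg_right hpil hr.le,
        mul_le_mul_of_nonneg_right hpiu hr.le, sq_nonneg (π*r/2 - 1), hr14, hr2]
    have expand : (6+r^2)*(π/2 - 1/r)^2*r - 8*(r - π/2 + 1/r)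
        = ((6+r^2)*(π*r/2 - 1)^2 - (8*r^2 - 4*π*r + 8))/r := by
      field_simp
      ring
    have hnn : 0 ≤ (6+r^2)*(π/2 - 1/r)^2*r - 8*(r - π/2 + 1/r) := by
      rw [expand]
      apply div_nonneg (by linarith) hr.le
    have hfin : 8*(r - a) ≤ 8*(r - π/2 + 1/r) := by linarith
    have hfin2 : (6+r^2)*(π/2 - 1/r)^2*r ≤ (6+r^2)*a^2*r := by
      apply mul_le_mul_of_nonneg_right _ hr.le
      apply mul_le_mul_of_nonneg_left hsq (by positivity)
    linarith

/-! ### Derivative computations -/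

lemma hasDerivAt_base (r : ℝ) : HasDerivAt (fun y : ℝ => 1 + y^2) (2*r) r := by
  simpa using ((hasDerivAt_pow 2 r).const_add (1:ℝ))

lemma hu_pos (r : ℝ) : (0:ℝ) < 1 + r^2 := by positivity

noncomputable def F1 (r : ℝ) : ℝ :=
  (1+r^2)^(-(1/4:ℝ)) - (1/2)*r^2*(1+r^2)^(-(1/4:ℝ)-1)

noncomputable def F2 (r : ℝ) : ℝ :=
  -(3/2)*r*(1+r^2)^(-(1/4:ℝ)-1) + (5/4)*r^3*(1+r^2)^(-(1/4:ℝ)-1-1)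

lemma hasDerivAt_f (r : ℝ) : HasDerivAt f (F1 r) r := by
  have h2 := (hasDerivAt_base r).rpow_const (p := -(1/4:ℝ)) (Or.inl (hu_pos r).ne')
  have h3 := (hasDerivAt_id r).mul h2
  refine h3.congr_deriv (Eq.symm ?_)
  simp only [F1, id]
  ring

lemma hasDerivAt_F1 (r : ℝ) : HasDerivAt F1 (F2 r) r := by
  have h2 := (hasDerivAt_base r).rpow_const (p := -(1/4:ℝ)) (Or.inl (hu_pos r).ne')
  have h4 := (hasDerivAt_base r).rpow_const (p := -(1/4:ℝ)-1) (Or.inl (hu_pos r).ne')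
  have h5 := ((hasDerivAt_pow 2 r).const_mul (1/2:ℝ)).mul h4
  have h6 := h2.sub h5
  refine h6.congr_deriv (Eq.symm ?_)
  simp only [F2]
  push_cast
  ring

lemma deriv2_f (r : ℝ) : deriv (deriv f) r = F2 r := by
  have hd : deriv f = F1 := funext fun x => (hasDerivAt_f x).deriv
  rw [hd]
  exact (hasDerivAt_F1 r).deriv

lemma f_ratio {r : ℝ} (hr : 0 < r) :
    deriv (deriv f) r / f r = -((6+r^2)/(4*(1+r^2)^2)) := by
  rw [deriv2_f]
  have hu := hu_pos r
  have hP : (0:ℝ) < (1+r^2)^(-(1/4:ℝ)) := rpow_pos_of_pos hu _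
  have e1 : (1+r^2)^(-(1/4:ℝ)-1) = (1+r^2)^(-(1/4:ℝ)) / (1+r^2) := by
    rw [rpow_sub hu, rpow_one]
  have e2 : (1+r^2)^(-(1/4:ℝ)-1-1) = (1+r^2)^(-(1/4:ℝ)) / (1+r^2)^2 := by
    rw [show (-(1/4:ℝ)-1-1) = -(1/4:ℝ) - (2:ℕ) by push_cast; ring,
      rpow_sub hu, rpow_natCast]
  simp only [F2, f, e1, e2]
  field_simp
  ring

noncomputable def H1 (α r : ℝ) : ℝ := -α*r*(1+r^2)^(-(α/2)-1)

noncomputable def H2 (α r : ℝ) : ℝ :=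
  -α*(1+r^2)^(-(α/2)-1) + α*(α+2)*r^2*(1+r^2)^(-(α/2)-1-1)

lemma hasDerivAt_h (α r : ℝ) : HasDerivAt (h α) (H1 α r) r := by
  have h2 := (hasDerivAt_base r).rpow_const (p := -(α/2)) (Or.inl (hu_pos r).ne')
  refine h2.congr_deriv (Eq.symm ?_)
  simp only [H1]; ring

lemma hasDerivAt_H1 (α r : ℝ) : HasDerivAt (H1 α) (H2 α r) r := by
  have h4 := (hasDerivAt_base r).rpow_const (p := -(α/2)-1) (Or.inl (hu_pos r).ne')
  have h5 := ((hasDerivAt_id r).const_mul (-α)).mul h4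
  refine h5.congr_deriv (Eq.symm ?_)
  simp only [H2, id]; ring

lemma deriv2_h (α r : ℝ) : deriv (deriv (h α)) r = H2 α r := by
  have hd : deriv (h α) = H1 α := funext fun x => (hasDerivAt_h α x).deriv
  rw [hd]; exact (hasDerivAt_H1 α r).deriv

lemma h_ratio (α : ℝ) {r : ℝ} (hr : 0 < r) :
    deriv (deriv (h α)) r / h α r = α*((α+1)*r^2 - 1)/(1+r^2)^2 := by
  rw [deriv2_h]
  have hu := hu_pos r
  have hP : (0:ℝ) < (1+r^2)^(-(α/2)) := rpow_pos_of_pos hu _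
  have e1 : (1+r^2)^(-(α/2)-1) = (1+r^2)^(-(α/2)) / (1+r^2) := by
    rw [rpow_sub hu, rpow_one]
  have e2 : (1+r^2)^(-(α/2)-1-1) = (1+r^2)^(-(α/2)) / (1+r^2)^2 := by
    rw [show (-(α/2)-1-1) = -(α/2) - (2:ℕ) by push_cast; ring,
      rpow_sub hu, rpow_natCast]
  simp only [H2, h, e1, e2]
  field_simp
  ring

noncomputable def G1 (r : ℝ) : ℝ := (arctan r - r/(1+r^2)) / (arctan r)^2

noncomputable def G2 (r : ℝ) : ℝ := 2*(r - arctan r)/((1+r^2)^2 * (arctan r)^3)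

lemma hasDerivAt_G {r : ℝ} (hr : 0 < r) : HasDerivAt G (G1 r) r := by
  have ha := my_arctan_pos hr
  have h1 := (hasDerivAt_id r).div (hasDerivAt_arctan r) ha.ne'
  refine h1.congr_deriv (Eq.symm ?_)
  simp only [G1, id]
  rw [div_eq_div_iff (by positivity) (by positivity)]
  field_simp [(hu_pos r).ne']
  try ring

lemma hasDerivAt_G1 {r : ℝ} (hr : 0 < r) : HasDerivAt G1 (G2 r) r := by
  have ha := my_arctan_pos hr
  have hu := hu_pos r
  have hnum : HasDerivAt (fun y : ℝ => arctan y - y/(1+y^2))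
      (1/(1+r^2) - (1*(1+r^2) - r*(2*r))/(1+r^2)^2) r :=
    (hasDerivAt_arctan r).sub ((hasDerivAt_id r).div (hasDerivAt_base r) hu.ne')
  have hden : HasDerivAt (fun y : ℝ => (arctan y)^2)
      (2 * (arctan r)^1 * (1/(1+r^2))) r := by
    exact (hasDerivAt_arctan r).pow 2 |>.congr_deriv (by push_cast; ring)
  have h1 := hnum.div hden (by positivity : (arctan r)^2 ≠ 0)
  refine h1.congr_deriv (Eq.symm ?_)
  simp only [G2]
  rw [div_eq_div_iff (by positivity) (by positivity)]
  field_simp [ha.ne', hu.ne']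
  ring

lemma deriv2_G {r : ℝ} (hr : 0 < r) : deriv (deriv G) r = G2 r := by
  have hev : deriv G =ᶠ[nhds r] G1 := by
    filter_upwards [Ioi_mem_nhds hr] with x hx
    exact (hasDerivAt_G hx).deriv
  rw [hev.deriv_eq]
  exact (hasDerivAt_G1 hr).deriv

lemma G_ratio {r : ℝ} (hr : 0 < r) :
    deriv (deriv G) r / G r = 2*(r - arctan r)/((1+r^2)^2 * (arctan r)^2 * r) := by
  rw [deriv2_G hr]
  have ha := my_arctan_pos hr
  have hu := hu_pos r
  simp only [G2, G]
  rw [div_div_eq_mul_div, div_mul_eq_mul_div, div_div]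
  rw [div_eq_div_iff (by positivity) (by positivity)]
  ring

/-- Radial Ricci curvature positivity: if `k ≥ 2` and `m > k + 4α(α+1)`, then
`−m·f″/f − k·G″/G − h″/h > 0` for all `r > 0`. -/
theorem statement11 (α : ℝ) (hα : 0 < α) (m k : ℝ) (hk : 2 ≤ k)
    (hm : m > k + 4 * α * (α + 1)) :
    ∀ r : ℝ, 0 < r →
      -m * (deriv (deriv f) r / f r) - k * (deriv (deriv G) r / G r)
        - deriv (deriv (h α)) r / h α r > 0 := by
  intro r hr
  rw [f_ratio hr, G_ratio hr, h_ratio α hr]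
  have ha := my_arctan_pos hr
  have hu := hu_pos r
  set a := arctan r
  set A : ℝ := (6+r^2)/(4*(1+r^2)^2) with hA_def
  set B : ℝ := 2*(r-a)/((1+r^2)^2*a^2*r) with hB_def
  set C : ℝ := α*((α+1)*r^2-1)/(1+r^2)^2 with hC_def
  have hA : 0 < A := by rw [hA_def]; positivity
  have hBA : B ≤ A := by
    rw [hB_def, hA_def, div_le_div_iff₀ (by positivity) (by positivity)]
    nlinarith [mul_le_mul_of_nonneg_right (my_key hr) (sq_nonneg (1+r^2))]
  have hAC : 4*α*(α+1)*A - C = (6*α*(α+1)+α)/(1+r^2)^2 := by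
    rw [hA_def, hC_def]
    field_simp
    ring
  have hpos2 : (0:ℝ) < (6*α*(α+1)+α)/(1+r^2)^2 := by positivity
  have h1 : 0 ≤ k * (A - B) := mul_nonneg (by linarith) (by linarith)
  have h2 : 0 < (m - k - 4*α*(α+1)) * A := mul_pos (by nlinarith) hA
  nlinarith [h1, h2, hAC, hpos2]
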